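/- Let π, σ ∈ S_n with L := LCS(π,σ) ≥ 2 and let (c₁,...,c_L) be any longest common subsequence of π and σ. For 1 ≤ i < j ≤ L define I^π_{i,j} = {x : c_i ≤_π x ≤_π c_j}, I^σ_{i,j} = {x : c_i ≤_σ x ≤_σ c_j}, and W_{i,j} = |I^π_{i,j} ∪ I^σ_{i,j}|. Then the collision probability of the record-based hash family satisfies P_H(π,σ) ≥ (1/n²)·Σ_{1 ≤ i < j ≤ L} 1/W_{i,j}. -/

import Mathlib

open scoped Classical
open Finset

noncomputable section

def oneLine {n : ℕ} (π : Equiv.Perm (Fin n)) : List (Fin n) :=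
  (List.finRange n).map π

def lcs {n : ℕ} (π σ : Equiv.Perm (Fin n)) : ℕ :=
  sSup {k | ∃ l : List (Fin n), l.Sublist (oneLine π) ∧ l.Sublist (oneLine σ) ∧ l.length = k}

/-- `RecSet τ z π` : the set of new record maxima according to `τ` obtained while scanning
the one-line representation of `π` starting from `z`. Here `a ≤_π b` means
`π⁻¹ a ≤ π⁻¹ b`. -/
def RecSet {n : ℕ} (τ : Equiv.Perm (Fin n)) (z : Fin n) (π : Equiv.Perm (Fin n)) :
    Finset (Fin n) :=
  Finset.univ.filter (fun a =>
    π⁻¹ z ≤ π⁻¹ a ∧ ∀ b : Fin n, π⁻¹ z ≤ π⁻¹ b → π⁻¹ b < π⁻¹ a → τ⁻¹ b < τ⁻¹ a)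

/-- The hash function `h_{τ,z,a}` mapping into `{⋆} ⊔ S_n` (modeled as `Option`). -/
def recHash {n : ℕ} (τ : Equiv.Perm (Fin n)) (z a : Fin n) (π : Equiv.Perm (Fin n)) :
    Option (Equiv.Perm (Fin n)) :=
  if a ∈ RecSet τ z π then none else some π

/-- Collision probability of the record-based hash family, with `τ, z, a` drawn
independently and uniformly at random. -/
def recCollProb {n : ℕ} (π σ : Equiv.Perm (Fin n)) : ℝ :=
  (∑ τ : Equiv.Perm (Fin n), ∑ z : Fin n, ∑ a : Fin n,
      if recHash τ z a π = recHash τ z a σ then (1 : ℝ) else 0) /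
    (Fintype.card (Equiv.Perm (Fin n)) * n * n)

/-- The interval `I^π_{i,j} = {x : c_i ≤_π x ≤_π c_j}`. -/
def interval {n L : ℕ} (π : Equiv.Perm (Fin n)) (c : Fin L → Fin n) (i j : Fin L) :
    Finset (Fin n) :=
  Finset.univ.filter (fun x => π⁻¹ (c i) ≤ π⁻¹ x ∧ π⁻¹ x ≤ π⁻¹ (c j))

/- auxiliary lemmas -/
def maxSet {n : ℕ} (S : Finset (Fin n)) (a : Fin n) : Finset (Equiv.Perm (Fin n)) :=
  Finset.univ.filter (fun τ => ∀ b ∈ S, b ≠ a → τ⁻¹ b < τ⁻¹ a)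

lemma mem_maxSet {n : ℕ} {S : Finset (Fin n)} {a : Fin n} {τ : Equiv.Perm (Fin n)} :
    τ ∈ maxSet S a ↔ ∀ b ∈ S, b ≠ a → τ⁻¹ b < τ⁻¹ a := by
  simp [maxSet]

lemma maxSet_swap_mem {n : ℕ} {S : Finset (Fin n)} {a x : Fin n} (ha : a ∈ S) (hx : x ∈ S)
    (hxa : x ≠ a) {τ : Equiv.Perm (Fin n)} (hτ : τ ∈ maxSet S x) :
    Equiv.swap x a * τ ∈ maxSet S a := by
  rw [mem_maxSet] at hτ ⊢
  intro b hb hba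
  have hinv : (Equiv.swap x a * τ)⁻¹ = τ⁻¹ * Equiv.swap x a := by
    rw [mul_inv_rev, Equiv.swap_inv]
  rw [hinv]
  simp only [Equiv.Perm.mul_apply]
  rw [Equiv.swap_apply_right]
  rcases eq_or_ne b x with rfl | hbx
  · rw [Equiv.swap_apply_left]
    exact hτ a ha (Ne.symm hxa)
  · rw [Equiv.swap_apply_of_ne_of_ne hbx hba]
    exact hτ b hb hbx

lemma maxSet_card_eq {n : ℕ} (S : Finset (Fin n)) {a x : Fin n} (ha : a ∈ S) (hx : x ∈ S) :
    (maxSet S x).card = (maxSet S a).card := by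
  rcases eq_or_ne x a with rfl | hxa
  · rfl
  refine Finset.card_nbij' (fun τ => Equiv.swap x a * τ) (fun τ => Equiv.swap x a * τ)
    (fun τ hτ => maxSet_swap_mem ha hx hxa hτ)
    (fun τ hτ => ?_) (fun τ _ => ?_) (fun τ _ => ?_)
  · have := maxSet_swap_mem hx ha (Ne.symm hxa) hτ
    rwa [Equiv.swap_comm] at this
  · simp [← mul_assoc]
  · simp [← mul_assoc]

lemma maxSet_partition {n : ℕ} (S : Finset (Fin n)) (hS : S.Nonempty) :
    S.biUnion (fun x => maxSet S x) = Finset.univ := by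
  apply Finset.eq_univ_of_forall
  intro τ
  obtain ⟨x, hx, hmax⟩ := S.exists_max_image (fun b => τ⁻¹ b) hS
  refine Finset.mem_biUnion.2 ⟨x, hx, mem_maxSet.2 fun b hb hbx => ?_⟩
  exact lt_of_le_of_ne (hmax b hb) (fun h => hbx (τ⁻¹.injective h))

lemma maxSet_card_mul {n : ℕ} (S : Finset (Fin n)) {a : Fin n} (ha : a ∈ S) :
    (maxSet S a).card * S.card = Fintype.card (Equiv.Perm (Fin n)) := by
  have hd : ∀ x ∈ S, ∀ y ∈ S, x ≠ y → Disjoint (maxSet S x) (maxSet S y) := by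
    intro x hx y hy hxy
    rw [Finset.disjoint_left]
    intro τ hτx hτy
    have h1 := (mem_maxSet.1 hτx) y hy (Ne.symm hxy)
    have h2 := (mem_maxSet.1 hτy) x hx hxy
    exact absurd (h1.trans h2) (lt_irrefl _)
  have := Finset.card_biUnion hd
  rw [maxSet_partition S ⟨a, ha⟩] at this
  rw [Fintype.card, this]
  rw [Finset.sum_congr rfl (fun x hx => maxSet_card_eq S ha hx)]
  rw [Finset.sum_const, smul_eq_mul, mul_comm]

def recG {n : ℕ} (π σ : Equiv.Perm (Fin n)) (z a : Fin n) : ℝ :=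
  ∑ τ : Equiv.Perm (Fin n),
    (if a ∈ RecSet τ z π ∧ a ∈ RecSet τ z σ then (1 : ℝ) else 0)

lemma recG_nonneg {n : ℕ} (π σ : Equiv.Perm (Fin n)) (z a : Fin n) :
    0 ≤ recG π σ z a := by
  apply Finset.sum_nonneg
  intro τ _
  split <;> norm_num

theorem recCollProb_lower_bound {n L : ℕ} (π σ : Equiv.Perm (Fin n))
    (hL : L = lcs π σ) (hL2 : 2 ≤ L) (c : Fin L → Fin n)
    (hcπ : ∀ i j : Fin L, i < j → π⁻¹ (c i) < π⁻¹ (c j))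
    (hcσ : ∀ i j : Fin L, i < j → σ⁻¹ (c i) < σ⁻¹ (c j)) :
    (1 / (n : ℝ) ^ 2) *
        (∑ i : Fin L, ∑ j : Fin L,
          if i < j then
            (1 : ℝ) / ((interval π c i j ∪ interval σ c i j).card : ℝ)
          else 0) ≤
      recCollProb π σ := by
  have hn : 0 < n := (c ⟨0, by omega⟩).pos
  have hN : 0 < Fintype.card (Equiv.Perm (Fin n)) := Fintype.card_pos
  -- c is injective
  have hinj : Function.Injective c := by
    intro i j h
    rcases lt_trichotomy i j with h1 | h1 | h1
    · exact absurd (hcπ i j h1) (by rw [h]; exact lt_irrefl _)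
    · exact h1
    · exfalso
      have h2 := hcπ j i h1
      rw [h] at h2
      exact lt_irrefl _ h2
  -- c j in the union
  have hSmem : ∀ i j : Fin L, i < j → c j ∈ interval π c i j ∪ interval σ c i j := by
    intro i j hij
    exact Finset.mem_union_left _ (by simp [interval, le_of_lt (hcπ i j hij)]; exact le_of_lt (hcπ i j hij))
  -- max permutations produce records
  have hrec : ∀ i j : Fin L, i < j → ∀ τ : Equiv.Perm (Fin n),
      τ ∈ maxSet (interval π c i j ∪ interval σ c i j) (c j) →
      c j ∈ RecSet τ (c i) π ∧ c j ∈ RecSet τ (c i) σ := by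
    intro i j hij τ hτ
    have hτ' := mem_maxSet.1 hτ
    constructor
    · rw [RecSet, Finset.mem_filter]
      refine ⟨Finset.mem_univ _, le_of_lt (hcπ i j hij), fun b hb1 hb2 => ?_⟩
      refine hτ' b (Finset.mem_union_left _ (by simp [interval, hb1, le_of_lt hb2]; exact ⟨hb1, le_of_lt hb2⟩)) ?_
      intro h; rw [h] at hb2; exact lt_irrefl _ hb2
    · rw [RecSet, Finset.mem_filter]
      refine ⟨Finset.mem_univ _, le_of_lt (hcσ i j hij), fun b hb1 hb2 => ?_⟩
      refine hτ' b (Finset.mem_union_right _ (by simp [interval, hb1, le_of_lt hb2]; exact ⟨hb1, le_of_lt hb2⟩)) ?_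
      intro h; rw [h] at hb2; exact lt_irrefl _ hb2
  -- pointwise lower bound N / W ≤ g
  have hstep : ∀ i j : Fin L, i < j →
      (Fintype.card (Equiv.Perm (Fin n)) : ℝ) *
        ((1 : ℝ) / ((interval π c i j ∪ interval σ c i j).card : ℝ)) ≤
      recG π σ (c i) (c j) := by
    intro i j hij
    set S := interval π c i j ∪ interval σ c i j with hS
    have hm := maxSet_card_mul S (hSmem i j hij)
    have hW : (0:ℝ) < (S.card : ℝ) := by
      exact_mod_cast Finset.card_pos.2 ⟨c j, hSmem i j hij⟩
    have hm' : ((maxSet S (c j)).card : ℝ) * (S.card : ℝ)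
        = (Fintype.card (Equiv.Perm (Fin n)) : ℝ) := by exact_mod_cast hm
    have hcard : (Fintype.card (Equiv.Perm (Fin n)) : ℝ) * ((1:ℝ) / (S.card : ℝ))
        = ((maxSet S (c j)).card : ℝ) := by
      field_simp
      linarith [hm']
    rw [hcard]
    have hsum : ((maxSet S (c j)).card : ℝ)
        = ∑ τ : Equiv.Perm (Fin n), (if τ ∈ maxSet S (c j) then (1:ℝ) else 0) := by
      rw [Finset.sum_ite_mem, Finset.univ_inter, Finset.sum_const, nsmul_eq_mul, mul_one]
    rw [hsum, recG]
    apply Finset.sum_le_sum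
    intro τ _
    by_cases h : τ ∈ maxSet S (c j)
    · simp [h, hrec i j hij τ h]
    · simp [h]
      split <;> norm_num
  -- sum over pairs is at most the full sum
  have key3 : (∑ i : Fin L, ∑ j : Fin L, if i < j then recG π σ (c i) (c j) else 0)
      ≤ ∑ z : Fin n, ∑ a : Fin n, recG π σ z a := by
    have e1 : (∑ i : Fin L, ∑ j : Fin L, if i < j then recG π σ (c i) (c j) else 0)
        = ∑ p ∈ (Finset.univ ×ˢ Finset.univ : Finset (Fin L × Fin L)),
            (if p.1 < p.2 then recG π σ (c p.1) (c p.2) else 0) := by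
      rw [Finset.sum_product]
    have e2 : (∑ z : Fin n, ∑ a : Fin n, recG π σ z a)
        = ∑ q ∈ (Finset.univ ×ˢ Finset.univ : Finset (Fin n × Fin n)), recG π σ q.1 q.2 := by
      rw [Finset.sum_product]
    rw [e1, e2, ← Finset.sum_filter]
    have e3 : ∑ p ∈ (Finset.univ ×ˢ Finset.univ : Finset (Fin L × Fin L)).filter
          (fun p => p.1 < p.2), recG π σ (c p.1) (c p.2)
        = ∑ q ∈ ((Finset.univ ×ˢ Finset.univ : Finset (Fin L × Fin L)).filter
            (fun p => p.1 < p.2)).image (fun p => (c p.1, c p.2)),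
            recG π σ q.1 q.2 := by
      rw [Finset.sum_image]
      intro p _ q _ h
      have h1 : c p.1 = c q.1 := congrArg Prod.fst h
      have h2 : c p.2 = c q.2 := congrArg Prod.snd h
      exact Prod.ext (hinj h1) (hinj h2)
    rw [e3]
    apply Finset.sum_le_sum_of_subset_of_nonneg
    · rw [Finset.univ_product_univ]; exact Finset.subset_univ _
    · intro q _ _; exact recG_nonneg π σ q.1 q.2
  -- full sum is at most the collision count
  have key4 : (∑ z : Fin n, ∑ a : Fin n, recG π σ z a)
      ≤ ∑ τ : Equiv.Perm (Fin n), ∑ z : Fin n, ∑ a : Fin n,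
          (if recHash τ z a π = recHash τ z a σ then (1 : ℝ) else 0) := by
    have h1 : (∑ z : Fin n, ∑ a : Fin n, recG π σ z a)
        = ∑ τ : Equiv.Perm (Fin n), ∑ z : Fin n, ∑ a : Fin n,
            (if a ∈ RecSet τ z π ∧ a ∈ RecSet τ z σ then (1:ℝ) else 0) := by
      simp only [recG]
      calc (∑ z : Fin n, ∑ a : Fin n, ∑ τ : Equiv.Perm (Fin n),
              (if a ∈ RecSet τ z π ∧ a ∈ RecSet τ z σ then (1:ℝ) else 0))
          = ∑ z : Fin n, ∑ τ : Equiv.Perm (Fin n), ∑ a : Fin n,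
              (if a ∈ RecSet τ z π ∧ a ∈ RecSet τ z σ then (1:ℝ) else 0) :=
            Finset.sum_congr rfl fun z _ => Finset.sum_comm
        _ = _ := Finset.sum_comm
    rw [h1]
    refine Finset.sum_le_sum fun τ _ => Finset.sum_le_sum fun z _ =>
      Finset.sum_le_sum fun a _ => ?_
    by_cases h : a ∈ RecSet τ z π ∧ a ∈ RecSet τ z σ
    · simp [h, recHash, h.1, h.2]
    · simp [h]
      split <;> norm_num
  -- combine
  have key : (Fintype.card (Equiv.Perm (Fin n)) : ℝ) *
      (∑ i : Fin L, ∑ j : Fin L, if i < j then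
          (1 : ℝ) / ((interval π c i j ∪ interval σ c i j).card : ℝ) else 0)
      ≤ ∑ τ : Equiv.Perm (Fin n), ∑ z : Fin n, ∑ a : Fin n,
          (if recHash τ z a π = recHash τ z a σ then (1 : ℝ) else 0) := by
    rw [Finset.mul_sum]
    simp_rw [Finset.mul_sum, mul_ite, mul_zero]
    refine le_trans (le_trans ?_ key3) key4
    refine Finset.sum_le_sum fun i _ => Finset.sum_le_sum fun j _ => ?_
    split_ifs with h
    · exact hstep i j h
    · exact le_refl _
  -- final algebra
  unfold recCollProb
  have heq : (1 / (n : ℝ) ^ 2) *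
      (∑ i : Fin L, ∑ j : Fin L, if i < j then
          (1 : ℝ) / ((interval π c i j ∪ interval σ c i j).card : ℝ) else 0)
      = ((Fintype.card (Equiv.Perm (Fin n)) : ℝ) *
          (∑ i : Fin L, ∑ j : Fin L, if i < j then
            (1 : ℝ) / ((interval π c i j ∪ interval σ c i j).card : ℝ) else 0)) /
        ((Fintype.card (Equiv.Perm (Fin n)) : ℝ) * n * n) := by
    have hn' : (n : ℝ) ≠ 0 := Nat.cast_ne_zero.2 hn.ne'
    have hN' : (Fintype.card (Equiv.Perm (Fin n)) : ℝ) ≠ 0 := Nat.cast_ne_zero.2 hN.ne'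
    field_simp
  rw [heq]
  exact div_le_div_of_nonneg_right key (by positivity)
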